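/- Let p, q ≥ 0 with p + q > 0, let λ > 0, and let g : ℝ → ℝ be continuous with finite limits at +∞ and −∞. Suppose f₁ and f₂ are both continuous on ℝ with finite limits at +∞ and −∞, twice continuously differentiable on (−∞,0] and [0,∞) separately, satisfy λ² f(x) − f''(x) = g(x) for all x ≠ 0, and satisfy p·f'(0+) = q·f'(0−). Then f₁ = f₂. -/

import Mathlib

open MeasureTheory Real Filter

lemma aux_grow (u : ℝ → ℝ) (a c : ℝ) (hc : 0 < c)
    (hcont : Continuous u)
    (hcont' : ContinuousOn (deriv u) (Set.Ici a))
    (hd1 : ∀ x ∈ Set.Ioi a, DifferentiableAt ℝ u x)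
    (hd2 : ∀ x ∈ Set.Ioi a, DifferentiableAt ℝ (deriv u) x)
    (hode : ∀ x ∈ Set.Ioi a, c ≤ deriv (deriv u) x) :
    Tendsto u atTop atTop := by
  have h1 : ∀ y ∈ Set.Ici a, c * (y - a) ≤ deriv u y - deriv u a := by
    intro y hy
    exact (convex_Ici a).mul_sub_le_image_sub_of_le_deriv hcont'
      (by rw [interior_Ici]; exact fun x hx => (hd2 x hx).differentiableWithinAt)
      (by rw [interior_Ici]; exact hode) a Set.self_mem_Ici y hy hy
  have h2 : Tendsto (deriv u) atTop atTop := by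
    apply tendsto_atTop_mono' atTop
      (show ∀ᶠ y in atTop, deriv u a + c * (y - a) ≤ deriv u y by
        filter_upwards [eventually_ge_atTop a] with y hy
        linarith [h1 y hy])
    have : Tendsto (fun y : ℝ => c * (y - a)) atTop atTop :=
      (tendsto_atTop_add_const_right _ (-a) tendsto_id).const_mul_atTop hc
    simpa using tendsto_atTop_add_const_left _ (deriv u a) this
  obtain ⟨b, hb⟩ := ((h2.eventually (eventually_ge_atTop 1)).and
    (eventually_ge_atTop a)).exists_forall_of_atTop
  have h3 : ∀ y ∈ Set.Ici b, 1 * (y - b) ≤ u y - u b := by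
    intro y hy
    refine (convex_Ici b).mul_sub_le_image_sub_of_le_deriv hcont.continuousOn
      (fun x hx => ?_) (fun x hx => ?_) b Set.self_mem_Ici y hy hy
    · rw [interior_Ici] at hx
      exact (hd1 x (lt_of_le_of_lt (hb b le_rfl).2 hx)).differentiableWithinAt
    · rw [interior_Ici] at hx
      exact (hb x hx.le).1
  apply tendsto_atTop_mono' atTop
    (show ∀ᶠ y in atTop, u b + (y - b) ≤ u y by
      filter_upwards [eventually_ge_atTop b] with y hy
      have := h3 y hy; linarith)
  simpa [sub_eq_add_neg] using tendsto_atTop_add_const_left _ (u b)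
    (tendsto_atTop_add_const_right _ (-b) tendsto_id)

lemma aux_le (u : ℝ → ℝ) (c L : ℝ) (hc : 0 < c)
    (hu : Tendsto u atTop (nhds L))
    (hucont : Continuous u)
    (hd1 : ∀ x ∈ Set.Ioi (0:ℝ), DifferentiableAt ℝ u x)
    (hd2 : ∀ x ∈ Set.Ioi (0:ℝ), DifferentiableAt ℝ (deriv u) x)
    (hdc : ContinuousOn (deriv u) (Set.Ioi 0))
    (hode : ∀ x ∈ Set.Ioi (0:ℝ), deriv (deriv u) x = c * u x) :
    L ≤ 0 := by
  by_contra hL'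
  push_neg at hL'
  obtain ⟨a, ha⟩ := (((hu.eventually (eventually_ge_nhds (by linarith : L/2 < L))).and
    (eventually_gt_atTop 0))).exists_forall_of_atTop
  have hsub : Set.Ici (max a 1) ⊆ Set.Ioi (0:ℝ) := fun x hx =>
    lt_of_lt_of_le one_pos (le_trans (le_max_right a 1) hx)
  have hsub' : Set.Ioi (max a 1) ⊆ Set.Ioi (0:ℝ) := fun x hx => hsub (Set.Ioi_subset_Ici_self hx)
  have := aux_grow u (max a 1) (c * (L/2)) (by positivity) hucont
    (hdc.mono hsub) (fun x hx => hd1 x (hsub' hx)) (fun x hx => hd2 x (hsub' hx))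
    (fun x hx => by
      rw [hode x (hsub' hx)]
      have : L/2 ≤ u x := (ha x (le_trans (le_max_left a 1) hx.le)).1
      nlinarith)
  exact not_tendsto_atTop_of_tendsto_nhds hu this

lemma aux_eq (u : ℝ → ℝ) (c L : ℝ) (hc : 0 < c)
    (hu : Tendsto u atTop (nhds L))
    (hucont : Continuous u)
    (hd1 : ∀ x ∈ Set.Ioi (0:ℝ), DifferentiableAt ℝ u x)
    (hd2 : ∀ x ∈ Set.Ioi (0:ℝ), DifferentiableAt ℝ (deriv u) x)
    (hdc : ContinuousOn (deriv u) (Set.Ioi 0))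
    (hode : ∀ x ∈ Set.Ioi (0:ℝ), deriv (deriv u) x = c * u x) :
    L = 0 := by
  have dneg : deriv (fun x => -u x) = fun x => -deriv u x := funext fun x => deriv.neg
  have h2 := aux_le (fun x => -u x) c (-L) hc (hu.neg) (hucont.neg)
    (fun x hx => (hd1 x hx).neg)
    (fun x hx => by rw [dneg]; exact (hd2 x hx).neg)
    (by rw [dneg]; exact hdc.neg)
    (fun x hx => by
      rw [dneg, deriv.fun_neg, hode x hx]; ring)
  have h1 := aux_le u c L hc hu hucont hd1 hd2 hdc hode
  linarith

lemma aux_key (l : ℝ) (hl : 0 < l) (p q : ℝ) (hp : 0 ≤ p) (hq : 0 ≤ q) (hpq : 0 < p + q)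
    (h : ℝ → ℝ) (hc : Continuous h)
    (hd : ContDiffOn ℝ 2 h (Set.Ici 0)) (hd' : ContDiffOn ℝ 2 h (Set.Iic 0))
    (hode : ∀ x : ℝ, x ≠ 0 → deriv (deriv h) x = l^2 * h x)
    (hbc : p * derivWithin h (Set.Ici 0) 0 = q * derivWithin h (Set.Iic 0) 0)
    (htop : Tendsto h atTop (nhds 0)) (hbot : Tendsto h atBot (nhds 0)) :
    ∀ x, h x ≤ 0 := by
  by_contra hcon
  push_neg at hcon
  obtain ⟨x₁, hx₁⟩ := hcon
  have hcc : Tendsto h (cocompact ℝ) (nhds 0) := by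
    rw [cocompact_eq_atBot_atTop]; exact tendsto_sup.2 ⟨hbot, htop⟩
  obtain ⟨x₀, hx₀⟩ := hc.exists_forall_ge' x₁ (hcc.eventually (eventually_le_nhds hx₁))
  have hpos : 0 < h x₀ := lt_of_lt_of_le hx₁ (hx₀ x₁)
  have hconda : ContinuousOn (deriv h) (Set.Ioi 0) :=
    (hd.mono Set.Ioi_subset_Ici_self).continuousOn_deriv_of_isOpen isOpen_Ioi one_le_two
  have hconda' : ContinuousOn (deriv h) (Set.Iio 0) :=
    (hd'.mono Set.Iio_subset_Iic_self).continuousOn_deriv_of_isOpen isOpen_Iio one_le_two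
  obtain ⟨δ, hδpos, hδ⟩ := Metric.eventually_nhds_iff.mp
    ((hc.tendsto x₀).eventually (eventually_gt_nhds hpos))
  have hlsq : (0:ℝ) < l^2 := by positivity
  rcases lt_trichotomy x₀ 0 with hx0 | hx0 | hx0
  · -- x₀ < 0
    set b := x₀ - δ/2 with hbdef
    have hb : b < x₀ := by simp [hbdef]; linarith
    have hIccpos : ∀ y ∈ Set.Icc b x₀, 0 < h y := by
      intro y hy
      apply hδ
      have hy1 : x₀ - δ/2 ≤ y := hy.1
      have hy2 : y ≤ x₀ := hy.2
      rw [Real.dist_eq, abs_lt]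
      constructor <;> linarith
    have hIccsub : Set.Icc b x₀ ⊆ Set.Iio 0 := fun y hy => lt_of_le_of_lt hy.2 hx0
    have hder0 : deriv h x₀ = 0 :=
      IsLocalMax.deriv_eq_zero (Filter.Eventually.of_forall hx₀)
    have hmono : StrictMonoOn (deriv h) (Set.Icc b x₀) := by
      apply strictMonoOn_of_deriv_pos (convex_Icc _ _) (hconda'.mono hIccsub)
      intro y hy
      rw [interior_Icc] at hy
      rw [hode y (hIccsub (Set.Ioo_subset_Icc_self hy)).ne]
      exact mul_pos hlsq (hIccpos y (Set.Ioo_subset_Icc_self hy))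
    have hmono2 : StrictAntiOn h (Set.Icc b x₀) := by
      apply strictAntiOn_of_deriv_neg (convex_Icc _ _) hc.continuousOn
      intro y hy
      rw [interior_Icc] at hy
      have := hmono (Set.Ioo_subset_Icc_self hy) (Set.right_mem_Icc.2 hb.le) hy.2
      rw [hder0] at this
      exact this
    have := hmono2 (Set.left_mem_Icc.2 hb.le) (Set.right_mem_Icc.2 hb.le) hb
    exact absurd (hx₀ b) (not_le.2 this)
  · -- x₀ = 0
    subst hx0
    have hdiffR : DifferentiableWithinAt ℝ h (Set.Ici 0) 0 :=
      (hd.differentiableOn two_ne_zero) 0 Set.self_mem_Ici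
    have hdiffL : DifferentiableWithinAt ℝ h (Set.Iic 0) 0 :=
      (hd'.differentiableOn two_ne_zero) 0 Set.self_mem_Iic
    have hslopeR : Tendsto (slope h 0) (nhdsWithin 0 (Set.Ioi 0))
        (nhds (derivWithin h (Set.Ici 0) 0)) := by
      have := hdiffR.hasDerivWithinAt
      rw [hasDerivWithinAt_iff_tendsto_slope, Set.Ici_sdiff_left] at this
      exact this
    have hslopeL : Tendsto (slope h 0) (nhdsWithin 0 (Set.Iio 0))
        (nhds (derivWithin h (Set.Iic 0) 0)) := by
      have := hdiffL.hasDerivWithinAt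
      rw [hasDerivWithinAt_iff_tendsto_slope, Set.Iic_sdiff_right] at this
      exact this
    have hRle : derivWithin h (Set.Ici 0) 0 ≤ 0 := by
      refine le_of_tendsto hslopeR ?_
      filter_upwards [self_mem_nhdsWithin] with y hy
      rw [slope_def_field]
      apply div_nonpos_of_nonpos_of_nonneg
      · linarith [hx₀ y]
      · simp only [sub_zero]; exact (le_of_lt hy)
    have hLge : 0 ≤ derivWithin h (Set.Iic 0) 0 := by
      refine ge_of_tendsto hslopeL ?_
      filter_upwards [self_mem_nhdsWithin] with y hy
      rw [slope_def_field]
      apply div_nonneg_iff.2 (Or.inr ⟨by linarith [hx₀ y], by simp only [sub_zero]; exact (le_of_lt hy)⟩)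
    have h1 : p * derivWithin h (Set.Ici 0) 0 ≤ 0 := mul_nonpos_iff.2 (Or.inl ⟨hp, hRle⟩)
    have h2 : 0 ≤ q * derivWithin h (Set.Iic 0) 0 := mul_nonneg hq hLge
    have hbzero : p * derivWithin h (Set.Ici 0) 0 = 0 := le_antisymm h1 (hbc ▸ h2)
    have hbzero' : q * derivWithin h (Set.Iic 0) 0 = 0 := by rw [← hbc]; exact hbzero
    have hbpos : 0 < δ/2 := by linarith
    have hIccpos : ∀ y ∈ Set.Icc (-(δ/2)) (δ/2), 0 < h y := by
      intro y hy
      apply hδ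
      have hy1 : -(δ/2) ≤ y := hy.1
      have hy2 : y ≤ δ/2 := hy.2
      rw [Real.dist_eq, sub_zero, abs_lt]
      constructor <;> linarith
    have hpq' : 0 < p ∨ 0 < q := by
      by_contra hcon'
      push_neg at hcon'
      linarith [hcon'.1, hcon'.2]
    rcases hpq' with hp' | hq'
    · -- p > 0, right side
      have hR0 : derivWithin h (Set.Ici 0) 0 = 0 :=
        (mul_eq_zero.1 hbzero).resolve_left hp'.ne'
      have hφc : ContinuousOn (derivWithin h (Set.Ici 0)) (Set.Ici 0) :=
        hd.continuousOn_derivWithin (uniqueDiffOn_Ici 0) one_le_two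
      have hφeq : ∀ y ∈ Set.Ioi (0:ℝ), derivWithin h (Set.Ici 0) y = deriv h y := fun y hy =>
        derivWithin_of_mem_nhds (Filter.mem_of_superset (isOpen_Ioi.mem_nhds hy)
          Set.Ioi_subset_Ici_self)
      have hφmono : StrictMonoOn (derivWithin h (Set.Ici 0)) (Set.Icc 0 (δ/2)) := by
        apply strictMonoOn_of_deriv_pos (convex_Icc _ _)
          (hφc.mono (Set.Icc_subset_Ici_self))
        intro y hy
        rw [interior_Icc] at hy
        have hy0 : 0 < y := hy.1
        have heq : deriv (derivWithin h (Set.Ici 0)) y = deriv (deriv h) y :=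
          Filter.EventuallyEq.deriv_eq
            ((isOpen_Ioi.eventually_mem hy0).mono fun z hz => hφeq z hz)
        rw [heq, hode y hy0.ne']
        refine mul_pos hlsq (hIccpos y ⟨by linarith [hy.1], hy.2.le⟩)
      have hφpos : ∀ y ∈ Set.Ioo (0:ℝ) (δ/2), 0 < deriv h y := by
        intro y hy
        rw [← hφeq y hy.1]
        have := hφmono (Set.left_mem_Icc.2 hbpos.le) (Set.Ioo_subset_Icc_self hy) hy.1
        rwa [hR0] at this
      have hmono2 : StrictMonoOn h (Set.Icc 0 (δ/2)) := by
        apply strictMonoOn_of_deriv_pos (convex_Icc _ _) hc.continuousOn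
        intro y hy
        rw [interior_Icc] at hy
        exact hφpos y hy
      have := hmono2 (Set.left_mem_Icc.2 hbpos.le) (Set.right_mem_Icc.2 hbpos.le) hbpos
      exact absurd (hx₀ (δ/2)) (not_le.2 this)
    · -- q > 0, left side
      have hL0 : derivWithin h (Set.Iic 0) 0 = 0 :=
        (mul_eq_zero.1 hbzero').resolve_left hq'.ne'
      have hψc : ContinuousOn (derivWithin h (Set.Iic 0)) (Set.Iic 0) :=
        hd'.continuousOn_derivWithin (uniqueDiffOn_Iic 0) one_le_two
      have hψeq : ∀ y ∈ Set.Iio (0:ℝ), derivWithin h (Set.Iic 0) y = deriv h y := fun y hy =>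
        derivWithin_of_mem_nhds (Filter.mem_of_superset (isOpen_Iio.mem_nhds hy)
          Set.Iio_subset_Iic_self)
      have hψmono : StrictMonoOn (derivWithin h (Set.Iic 0)) (Set.Icc (-(δ/2)) 0) := by
        apply strictMonoOn_of_deriv_pos (convex_Icc _ _)
          (hψc.mono (Set.Icc_subset_Iic_self))
        intro y hy
        rw [interior_Icc] at hy
        have hy0 : y < 0 := hy.2
        have heq : deriv (derivWithin h (Set.Iic 0)) y = deriv (deriv h) y :=
          Filter.EventuallyEq.deriv_eq
            ((isOpen_Iio.eventually_mem hy0).mono fun z hz => hψeq z hz)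
        rw [heq, hode y hy0.ne]
        refine mul_pos hlsq (hIccpos y ⟨hy.1.le, by linarith [hy.2]⟩)
      have hψneg : ∀ y ∈ Set.Ioo (-(δ/2)) (0:ℝ), deriv h y < 0 := by
        intro y hy
        rw [← hψeq y hy.2]
        have := hψmono (Set.Ioo_subset_Icc_self hy) (Set.right_mem_Icc.2 (by linarith)) hy.2
        rwa [hL0] at this
      have hmono2 : StrictAntiOn h (Set.Icc (-(δ/2)) 0) := by
        apply strictAntiOn_of_deriv_neg (convex_Icc _ _) hc.continuousOn
        intro y hy
        rw [interior_Icc] at hy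
        exact hψneg y hy
      have := hmono2 (Set.left_mem_Icc.2 (by linarith)) (Set.right_mem_Icc.2 (by linarith))
        (by linarith)
      exact absurd (hx₀ (-(δ/2))) (not_le.2 this)
  · -- x₀ > 0
    set b := x₀ + δ/2 with hbdef
    have hb : x₀ < b := by simp [hbdef]; linarith
    have hIccpos : ∀ y ∈ Set.Icc x₀ b, 0 < h y := by
      intro y hy
      apply hδ
      have hy1 : x₀ ≤ y := hy.1
      have hy2 : y ≤ x₀ + δ/2 := hy.2
      rw [Real.dist_eq, abs_lt]
      constructor <;> linarith
    have hIccsub : Set.Icc x₀ b ⊆ Set.Ioi 0 := fun y hy => lt_of_lt_of_le hx0 hy.1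
    have hder0 : deriv h x₀ = 0 :=
      IsLocalMax.deriv_eq_zero (Filter.Eventually.of_forall hx₀)
    have hmono : StrictMonoOn (deriv h) (Set.Icc x₀ b) := by
      apply strictMonoOn_of_deriv_pos (convex_Icc _ _) (hconda.mono hIccsub)
      intro y hy
      rw [interior_Icc] at hy
      rw [hode y (hIccsub (Set.Ioo_subset_Icc_self hy)).ne']
      exact mul_pos hlsq (hIccpos y (Set.Ioo_subset_Icc_self hy))
    have hmono2 : StrictMonoOn h (Set.Icc x₀ b) := by
      apply strictMonoOn_of_deriv_pos (convex_Icc _ _) hc.continuousOn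
      intro y hy
      rw [interior_Icc] at hy
      have := hmono (Set.left_mem_Icc.2 hb.le) (Set.Ioo_subset_Icc_self hy) hy.1
      rw [hder0] at this
      exact this
    have := hmono2 (Set.left_mem_Icc.2 hb.le) (Set.right_mem_Icc.2 hb.le) hb
    exact absurd (hx₀ b) (not_le.2 this)

theorem stmt13 (p q : ℝ) (hp : 0 ≤ p) (hq : 0 ≤ q) (hpq : 0 < p + q)
    (l : ℝ) (hl : 0 < l) (g : ℝ → ℝ) (hg : Continuous g)
    (gp gm : ℝ) (hgt : Tendsto g atTop (nhds gp)) (hgb : Tendsto g atBot (nhds gm))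
    (f₁ f₂ : ℝ → ℝ)
    (h₁c : Continuous f₁) (h₂c : Continuous f₂)
    (h₁t : ∃ L : ℝ, Tendsto f₁ atTop (nhds L)) (h₁b : ∃ L : ℝ, Tendsto f₁ atBot (nhds L))
    (h₂t : ∃ L : ℝ, Tendsto f₂ atTop (nhds L)) (h₂b : ∃ L : ℝ, Tendsto f₂ atBot (nhds L))
    (h₁d : ContDiffOn ℝ 2 f₁ (Set.Ici 0)) (h₁d' : ContDiffOn ℝ 2 f₁ (Set.Iic 0))
    (h₂d : ContDiffOn ℝ 2 f₂ (Set.Ici 0)) (h₂d' : ContDiffOn ℝ 2 f₂ (Set.Iic 0))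
    (h₁eq : ∀ x : ℝ, x ≠ 0 → l^2 * f₁ x - deriv (deriv f₁) x = g x)
    (h₂eq : ∀ x : ℝ, x ≠ 0 → l^2 * f₂ x - deriv (deriv f₂) x = g x)
    (h₁bc : p * derivWithin f₁ (Set.Ici 0) 0 = q * derivWithin f₁ (Set.Iic 0) 0)
    (h₂bc : p * derivWithin f₂ (Set.Ici 0) 0 = q * derivWithin f₂ (Set.Iic 0) 0) :
    f₁ = f₂ := by
  obtain ⟨L₁, hL₁⟩ := h₁t
  obtain ⟨L₂, hL₂⟩ := h₂t
  obtain ⟨M₁, hM₁⟩ := h₁b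
  obtain ⟨M₂, hM₂⟩ := h₂b
  have hlsq : (0:ℝ) < l^2 := by positivity
  -- regularity package
  have reg : ∀ (f : ℝ → ℝ), ContDiffOn ℝ 2 f (Set.Ici 0) → ContDiffOn ℝ 2 f (Set.Iic 0) →
      ∀ x : ℝ, x ≠ 0 → DifferentiableAt ℝ f x ∧ DifferentiableAt ℝ (deriv f) x := by
    intro f hfi hfl x hx
    rcases hx.lt_or_gt with hneg | hpos
    · have h1 : ContDiffOn ℝ 2 f (Set.Iio 0) := hfl.mono Set.Iio_subset_Iic_self
      have hmem : Set.Iio 0 ∈ nhds x := isOpen_Iio.mem_nhds hneg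
      exact ⟨(h1.differentiableOn two_ne_zero).differentiableAt hmem,
        ((h1.deriv_of_isOpen (m := 1) isOpen_Iio (by norm_num)).differentiableOn one_ne_zero).differentiableAt
          hmem⟩
    · have h1 : ContDiffOn ℝ 2 f (Set.Ioi 0) := hfi.mono Set.Ioi_subset_Ici_self
      have hmem : Set.Ioi 0 ∈ nhds x := isOpen_Ioi.mem_nhds hpos
      exact ⟨(h1.differentiableOn two_ne_zero).differentiableAt hmem,
        ((h1.deriv_of_isOpen (m := 1) isOpen_Ioi (by norm_num)).differentiableOn one_ne_zero).differentiableAt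
          hmem⟩
  set h : ℝ → ℝ := fun x => f₁ x - f₂ x with hhdef
  have hc : Continuous h := h₁c.sub h₂c
  have hd : ContDiffOn ℝ 2 h (Set.Ici 0) := h₁d.sub h₂d
  have hd' : ContDiffOn ℝ 2 h (Set.Iic 0) := h₁d'.sub h₂d'
  have regh := reg h hd hd'
  have hodeh : ∀ x : ℝ, x ≠ 0 → deriv (deriv h) x = l^2 * h x := by
    intro x hx
    obtain ⟨hf₁, hf₁'⟩ := reg f₁ h₁d h₁d' x hx
    obtain ⟨hf₂, hf₂'⟩ := reg f₂ h₂d h₂d' x hx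
    have hev : deriv h =ᶠ[nhds x] fun y => deriv f₁ y - deriv f₂ y := by
      filter_upwards [isOpen_compl_singleton.eventually_mem hx] with y hy
      exact deriv_fun_sub (reg f₁ h₁d h₁d' y hy).1 (reg f₂ h₂d h₂d' y hy).1
    rw [hev.deriv_eq, deriv_fun_sub hf₁' hf₂']
    have e₁ := h₁eq x hx
    have e₂ := h₂eq x hx
    simp only [hhdef]
    ring_nf
    nlinarith [e₁, e₂]
  -- facts for h on Ioi 0
  have hd1R : ∀ x ∈ Set.Ioi (0:ℝ), DifferentiableAt ℝ h x := fun x hx => (regh x hx.ne').1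
  have hd2R : ∀ x ∈ Set.Ioi (0:ℝ), DifferentiableAt ℝ (deriv h) x := fun x hx => (regh x hx.ne').2
  have hdcR : ContinuousOn (deriv h) (Set.Ioi 0) :=
    (hd.mono Set.Ioi_subset_Ici_self).continuousOn_deriv_of_isOpen isOpen_Ioi one_le_two
  have hdcL : ContinuousOn (deriv h) (Set.Iio 0) :=
    (hd'.mono Set.Iio_subset_Iic_self).continuousOn_deriv_of_isOpen isOpen_Iio one_le_two
  have hodeR : ∀ x ∈ Set.Ioi (0:ℝ), deriv (deriv h) x = l^2 * h x := fun x hx => hodeh x hx.ne'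
  -- limit at +infty is 0
  have htop0 : Tendsto h atTop (nhds (L₁ - L₂)) := hL₁.sub hL₂
  have hLzero : L₁ - L₂ = 0 := aux_eq h (l^2) _ hlsq htop0 hc hd1R hd2R hdcR hodeR
  have htop : Tendsto h atTop (nhds 0) := hLzero ▸ htop0
  -- limit at -infty is 0, via x ↦ h (-x)
  set v : ℝ → ℝ := fun x => h (-x) with hvdef
  have hvd1 : ∀ x ∈ Set.Ioi (0:ℝ), DifferentiableAt ℝ v x := by
    intro x hx
    exact DifferentiableAt.comp x (regh (-x) (by simp; linarith [hx.out])).1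
      differentiable_neg.differentiableAt
  have hvderiv : deriv v = fun x => -deriv h (-x) := funext fun x => deriv_comp_neg h x
  have hvd2 : ∀ x ∈ Set.Ioi (0:ℝ), DifferentiableAt ℝ (deriv v) x := by
    intro x hx
    rw [hvderiv]
    exact (DifferentiableAt.comp x (regh (-x) (by simp; linarith [hx.out])).2
      differentiable_neg.differentiableAt).neg
  have hvdc : ContinuousOn (deriv v) (Set.Ioi 0) := by
    rw [hvderiv]
    exact ((hdcL.comp continuous_neg.continuousOn
      (fun x hx => by simpa using (by linarith [hx.out] : -x < 0))).neg)
  have hvode : ∀ x ∈ Set.Ioi (0:ℝ), deriv (deriv v) x = l^2 * v x := by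
    intro x hx
    rw [hvderiv]
    have e1 : deriv (fun x => -deriv h (-x)) x = -(deriv (fun x => deriv h (-x)) x) := deriv.fun_neg
    have e2 : deriv (fun x => deriv h (-x)) x = -(deriv (deriv h) (-x)) := deriv_comp_neg (deriv h) x
    rw [e1, e2, neg_neg, hodeh (-x) (by simp; linarith [hx.out])]
  have hbot0 : Tendsto v atTop (nhds (M₁ - M₂)) :=
    (hM₁.sub hM₂).comp tendsto_neg_atTop_atBot
  have hMzero : M₁ - M₂ = 0 := aux_eq v (l^2) _ hlsq hbot0
    (hc.comp continuous_neg) hvd1 hvd2 hvdc hvode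
  have hbot : Tendsto h atBot (nhds 0) := by
    have := hMzero ▸ ((hM₁.sub hM₂) : Tendsto h atBot (nhds (M₁ - M₂)))
    exact this
  -- boundary condition for h
  have hdiffR₁ : DifferentiableWithinAt ℝ f₁ (Set.Ici 0) 0 :=
    (h₁d.differentiableOn two_ne_zero) 0 Set.self_mem_Ici
  have hdiffR₂ : DifferentiableWithinAt ℝ f₂ (Set.Ici 0) 0 :=
    (h₂d.differentiableOn two_ne_zero) 0 Set.self_mem_Ici
  have hdiffL₁ : DifferentiableWithinAt ℝ f₁ (Set.Iic 0) 0 :=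
    (h₁d'.differentiableOn two_ne_zero) 0 Set.self_mem_Iic
  have hdiffL₂ : DifferentiableWithinAt ℝ f₂ (Set.Iic 0) 0 :=
    (h₂d'.differentiableOn two_ne_zero) 0 Set.self_mem_Iic
  have hbcR : derivWithin h (Set.Ici 0) 0 =
      derivWithin f₁ (Set.Ici 0) 0 - derivWithin f₂ (Set.Ici 0) 0 :=
    derivWithin_fun_sub hdiffR₁ hdiffR₂
  have hbcL : derivWithin h (Set.Iic 0) 0 =
      derivWithin f₁ (Set.Iic 0) 0 - derivWithin f₂ (Set.Iic 0) 0 :=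
    derivWithin_fun_sub hdiffL₁ hdiffL₂
  have hbch : p * derivWithin h (Set.Ici 0) 0 = q * derivWithin h (Set.Iic 0) 0 := by
    rw [hbcR, hbcL]; ring_nf; nlinarith [h₁bc, h₂bc]
  -- apply max principle to h and -h
  have k1 := aux_key l hl p q hp hq hpq h hc hd hd' hodeh hbch htop hbot
  have hnegderivWithinR : derivWithin (fun x => -h x) (Set.Ici 0) 0 =
      -derivWithin h (Set.Ici 0) 0 := derivWithin.fun_neg
  have hnegderivWithinL : derivWithin (fun x => -h x) (Set.Iic 0) 0 =
      -derivWithin h (Set.Iic 0) 0 := derivWithin.fun_neg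
  have hnegderiv : deriv (fun x => -h x) = fun x => -deriv h x := funext fun x => deriv.fun_neg
  have k2 := aux_key l hl p q hp hq hpq (fun x => -h x) hc.neg hd.neg hd'.neg
    (by
      intro x hx
      rw [hnegderiv]
      have e1 : deriv (fun x => -deriv h x) x = -(deriv (deriv h) x) := deriv.fun_neg
      rw [e1, hodeh x hx]; ring)
    (by rw [hnegderivWithinR, hnegderivWithinL]; ring_nf; nlinarith [hbch])
    (by simpa using htop.neg) (by simpa using hbot.neg)
  funext x
  have := k1 x
  have := k2 x
  simp only [hhdef] at *
  linarith
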